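/- If δ_t ≤ t·c + d for 0 ≤ t ≤ h, δ_t ≤ h·c + (t−h)·c' + d' for h < t ≤ h+k, and δ_t ≤ (t−k)·c + d + k·c' + d' for t > h+k (with all constants nonnegative and δ_t ≥ 0), then ∑_{t=0}^∞ γ^t δ_t ≤ (h/(1−γ) + γ^{h+k+1}/(1−γ)^2)·c + d/(1−γ) + (γ^{h+1}/(1−γ))·(k·c' + d'), for any γ ∈ [0,1). -/
import Mathlib


/-- Discounted sum bound for piecewise-bounded branched-rollout errors (Lemma C.4). -/
theorem branched_discounted_sum_bound (γ : ℝ) (hγ0 : 0 ≤ γ) (hγ1 : γ < 1)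
    (h k : ℕ) (c d c' d' : ℝ)
    (hc : 0 ≤ c) (hd : 0 ≤ d) (hc' : 0 ≤ c') (hd' : 0 ≤ d')
    (δ : ℕ → ℝ) (hδnn : ∀ t, 0 ≤ δ t)
    (h1 : ∀ t : ℕ, t ≤ h → δ t ≤ (t : ℝ) * c + d)
    (h2 : ∀ t : ℕ, h < t → t ≤ h + k →
      δ t ≤ (h : ℝ) * c + ((t : ℝ) - (h : ℝ)) * c' + d')
    (h3 : ∀ t : ℕ, h + k < t →
      δ t ≤ ((t : ℝ) - (k : ℝ)) * c + d + (k : ℝ) * c' + d') :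
    (∑' t : ℕ, γ ^ t * δ t) ≤
      ((h : ℝ) / (1 - γ) + γ ^ (h + k + 1) / (1 - γ) ^ 2) * c + d / (1 - γ) +
        (γ ^ (h + 1) / (1 - γ)) * ((k : ℝ) * c' + d') := by
  have h1γ : (0:ℝ) < 1 - γ := by linarith
  have hnorm : ‖γ‖ < 1 := by rwa [Real.norm_eq_abs, abs_of_nonneg hγ0]
  set a : ℝ := (k : ℝ) * c' + d' with ha
  have hann : 0 ≤ a := by positivity
  have S0 : Summable (fun t : ℕ => γ ^ t) := summable_geometric_of_lt_one hγ0 hγ1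
  have Sn : Summable (fun t : ℕ => (t : ℝ) * γ ^ t) := by
    have := summable_pow_mul_geometric_of_norm_lt_one (R := ℝ) 1 hnorm
    simpa using this
  -- the three pieces of the majorant
  set f1 : ℕ → ℝ := fun t => γ ^ t * ((h : ℝ) * c + d) with hf1
  set f2 : ℕ → ℝ := fun t => γ ^ t * (if h < t then a else 0) with hf2
  set f3 : ℕ → ℝ := fun t => γ ^ t * (if h + k < t then ((t : ℝ) - h - k) * c else 0) with hf3
  have S1 : Summable f1 := S0.mul_right _
  have S2 : Summable f2 := by
    apply Summable.of_nonneg_of_le _ _ (S0.mul_right a)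
    · intro t
      have : (0:ℝ) ≤ (if h < t then a else 0) := by split <;> simp [hann]
      positivity
    · intro t
      have hγt : (0:ℝ) ≤ γ ^ t := by positivity
      have : (if h < t then a else 0) ≤ a := by split <;> simp [hann]
      exact mul_le_mul_of_nonneg_left this hγt
  have hite3 : ∀ t : ℕ, (0:ℝ) ≤ (if h + k < t then ((t : ℝ) - h - k) * c else 0) := by
    intro t
    split
    · rename_i ht
      have h1 : (h : ℝ) + k ≤ (t : ℝ) := by exact_mod_cast ht.le
      have h2 : (0:ℝ) ≤ (t : ℝ) - h - k := by linarith
      positivity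
    · exact le_rfl
  have S3 : Summable f3 := by
    apply Summable.of_nonneg_of_le _ _ (Sn.mul_right c)
    · intro t
      have hγt : (0:ℝ) ≤ γ ^ t := by positivity
      simp only [hf3]
      exact mul_nonneg hγt (hite3 t)
    · intro t
      have hγt : (0:ℝ) ≤ γ ^ t := by positivity
      have hb : (if h + k < t then ((t : ℝ) - h - k) * c else 0) ≤ (t : ℝ) * c := by
        split
        · have ht0 : (0:ℝ) ≤ (t:ℝ) := by positivity
          have hk0 : (0:ℝ) ≤ (h:ℝ) + k := by positivity
          nlinarith
        · positivity
      calc γ ^ t * (if h + k < t then ((t : ℝ) - h - k) * c else 0)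
          ≤ γ ^ t * ((t : ℝ) * c) := mul_le_mul_of_nonneg_left hb hγt
        _ = (t : ℝ) * γ ^ t * c := by ring
  have SB : Summable (fun t => f1 t + f2 t + f3 t) := (S1.add S2).add S3
  -- pointwise bound
  have hpt : ∀ t : ℕ, γ ^ t * δ t ≤ f1 t + f2 t + f3 t := by
    intro t
    have hγt : (0:ℝ) ≤ γ ^ t := by positivity
    have hδb : δ t ≤ ((h : ℝ) * c + d) + (if h < t then a else 0) +
        (if h + k < t then ((t : ℝ) - h - k) * c else 0) := by
      rcases le_or_gt t h with ht | ht
      · have := h1 t ht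
        have htc : (t : ℝ) * c ≤ (h : ℝ) * c := by
          have : (t : ℝ) ≤ (h : ℝ) := by exact_mod_cast ht
          nlinarith
        have h2' : ¬ h < t := not_lt.mpr ht
        have h3' : ¬ h + k < t := not_lt.mpr (ht.trans (Nat.le_add_right _ _))
        simp only [if_neg h2', if_neg h3']
        linarith
      · rcases le_or_gt t (h + k) with htk | htk
        · have := h2 t ht htk
          have hth : (t : ℝ) - h ≤ (k : ℝ) := by
            have : (t : ℝ) ≤ (h : ℝ) + k := by exact_mod_cast htk
            linarith
          have : ((t : ℝ) - h) * c' ≤ (k : ℝ) * c' := by nlinarith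
          have h3' : ¬ h + k < t := not_lt.mpr htk
          simp only [if_pos ht, if_neg h3', ha]
          linarith
        · have := h3 t htk
          have hht : h < t := lt_of_le_of_lt (Nat.le_add_right _ _) htk
          simp only [if_pos hht, if_pos htk, ha]
          have : ((t : ℝ) - k) * c = (h:ℝ) * c + ((t : ℝ) - h - k) * c := by ring
          linarith
    calc γ ^ t * δ t ≤ γ ^ t * (((h : ℝ) * c + d) + (if h < t then a else 0) +
        (if h + k < t then ((t : ℝ) - h - k) * c else 0)) :=
          mul_le_mul_of_nonneg_left hδb hγt
      _ = f1 t + f2 t + f3 t := by simp only [hf1, hf2, hf3]; ring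
  have SL : Summable (fun t : ℕ => γ ^ t * δ t) := by
    apply Summable.of_nonneg_of_le _ hpt SB
    intro t
    have := hδnn t
    positivity
  have hle : (∑' t : ℕ, γ ^ t * δ t) ≤ ∑' t, (f1 t + f2 t + f3 t) :=
    Summable.tsum_le_tsum hpt SL SB
  -- compute the three sums
  have T1 : (∑' t : ℕ, f1 t) = ((h : ℝ) * c + d) * (1 - γ)⁻¹ := by
    rw [hf1, tsum_mul_right, tsum_geometric_of_lt_one hγ0 hγ1]; ring
  have T2 : (∑' t : ℕ, f2 t) = γ ^ (h + 1) * (1 - γ)⁻¹ * a := by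
    rw [← Summable.sum_add_tsum_nat_add (h + 1) S2]
    have hz : (∑ i ∈ Finset.range (h + 1), f2 i) = 0 := by
      apply Finset.sum_eq_zero
      intro i hi
      have : ¬ h < i := not_lt.mpr (Nat.lt_succ_iff.mp (Finset.mem_range.mp hi))
      simp [hf2, this]
    rw [hz, zero_add]
    have : ∀ n : ℕ, f2 (n + (h + 1)) = γ ^ n * (γ ^ (h + 1) * a) := by
      intro n
      have : h < n + (h + 1) := by omega
      simp [hf2, this, pow_add]
      ring
    simp_rw [this]
    rw [tsum_mul_right, tsum_geometric_of_lt_one hγ0 hγ1]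
    ring
  have Tgeom2 : (∑' n : ℕ, ((n : ℝ) + 1) * γ ^ n) = ((1 - γ) ^ 2)⁻¹ := by
    have e1 : (∑' n : ℕ, (n : ℝ) * γ ^ n) = γ / (1 - γ) ^ 2 :=
      tsum_coe_mul_geometric_of_norm_lt_one hnorm
    have e2 : (∑' n : ℕ, ((n : ℝ) * γ ^ n + γ ^ n)) =
        γ / (1 - γ) ^ 2 + (1 - γ)⁻¹ := by
      rw [Summable.tsum_add Sn S0, e1, tsum_geometric_of_lt_one hγ0 hγ1]
    have e3 : (fun n : ℕ => ((n : ℝ) + 1) * γ ^ n) =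
        fun n : ℕ => (n : ℝ) * γ ^ n + γ ^ n := by funext n; ring
    rw [e3, e2]
    field_simp
    ring
  have Sshift : Summable (fun n : ℕ => ((n : ℝ) + 1) * γ ^ n) := by
    have : (fun n : ℕ => ((n : ℝ) + 1) * γ ^ n) =
        fun n : ℕ => (n : ℝ) * γ ^ n + γ ^ n := by funext n; ring
    rw [this]; exact Sn.add S0
  have T3 : (∑' t : ℕ, f3 t) = γ ^ (h + k + 1) * ((1 - γ) ^ 2)⁻¹ * c := by
    rw [← Summable.sum_add_tsum_nat_add (h + k + 1) S3]
    have hz : (∑ i ∈ Finset.range (h + k + 1), f3 i) = 0 := by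
      apply Finset.sum_eq_zero
      intro i hi
      have : ¬ h + k < i := by
        have := Finset.mem_range.mp hi; omega
      simp [hf3, this]
    rw [hz, zero_add]
    have : ∀ n : ℕ, f3 (n + (h + k + 1)) =
        ((n : ℝ) + 1) * γ ^ n * (γ ^ (h + k + 1) * c) := by
      intro n
      have hlt : h + k < n + (h + k + 1) := by omega
      have hcast : ((n + (h + k + 1) : ℕ) : ℝ) - h - k = (n : ℝ) + 1 := by
        push_cast; ring
      simp only [hf3, if_pos hlt, hcast, pow_add]
      ring
    simp_rw [this]
    rw [tsum_mul_right, Tgeom2]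
    ring
  have Tsum : (∑' t : ℕ, (f1 t + f2 t + f3 t)) =
      ((h : ℝ) * c + d) * (1 - γ)⁻¹ + γ ^ (h + 1) * (1 - γ)⁻¹ * a +
        γ ^ (h + k + 1) * ((1 - γ) ^ 2)⁻¹ * c := by
    rw [Summable.tsum_add (S1.add S2) S3, Summable.tsum_add S1 S2, T1, T2, T3]
  rw [Tsum] at hle
  refine hle.trans_eq ?_
  rw [ha]
  field_simp
  ring
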